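/- Let E and F be nonzero real vector spaces, (W_i)_{i∈I} a nonempty family of wedges in E and (V_j)_{j∈J} a nonempty family of wedges in F. Then ⋂_{i∈I, j∈J} L_{W_i,V_j}(E,F) is a cone (i.e., its intersection with its negative is {0}) if and only if ∑_{i∈I} W_i is generating in E (i.e., ∑_{i∈I} W_i − ∑_{i∈I} W_i = E) and ⋂_{j∈J} V_j is a cone. -/

import Mathlib

/-- A wedge in a real vector space: a nonempty subset closed under addition
and multiplication by nonnegative scalars. -/
def IsWedge {E : Type*} [AddCommGroup E] [Module ℝ E] (W : Set E) : Prop :=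
  W.Nonempty ∧ (∀ x ∈ W, ∀ y ∈ W, x + y ∈ W) ∧ ∀ (c : ℝ), 0 ≤ c → ∀ x ∈ W, c • x ∈ W

/-- `u` is a multi-upper bound of the family `(x i, W i)`. -/
def IsMultiUpperBound {E ι : Type*} [AddCommGroup E] [Module ℝ E]
    (x : ι → E) (W : ι → Set E) (u : E) : Prop :=
  ∀ i, u - x i ∈ W i

/-- `z` is a multi-supremum of the family `(x i, W i)`. -/
def IsMultiSup {E ι : Type*} [AddCommGroup E] [Module ℝ E]
    (x : ι → E) (W : ι → Set E) (z : E) : Prop :=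
  IsMultiUpperBound x W z ∧ ∀ u, IsMultiUpperBound x W u → ∀ i, u - z ∈ W i


/-- `∑_{i ∈ I} W i` : the set of all finite (nonempty) sums of elements of `⋃ i, W i`. -/
def wedgeSum {E ι : Type*} [AddCommGroup E] [Module ℝ E] (W : ι → Set E) : Set E :=
  {x | ∃ l : List E, l ≠ [] ∧ (∀ y ∈ l, y ∈ ⋃ i, W i) ∧ l.sum = x}

open scoped Pointwise

lemma list_sum_map_smul {E : Type*} [AddCommGroup E] [Module ℝ E] (c : ℝ) (l : List E) :
    (l.map (c • ·)).sum = c • l.sum := by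
  induction l with
  | nil => simp
  | cons x xs ih => simp [smul_add, ih]

lemma IsWedge.zero_mem' {E : Type*} [AddCommGroup E] [Module ℝ E] {W : Set E}
    (h : IsWedge W) : (0 : E) ∈ W := by
  obtain ⟨x, hx⟩ := h.1
  simpa using h.2.2 0 le_rfl x hx

lemma mem_wedgeSum_of_mem {E ι : Type*} [AddCommGroup E] [Module ℝ E] {W : ι → Set E}
    (i : ι) {x : E} (hx : x ∈ W i) : x ∈ wedgeSum W :=
  ⟨[x], by simp, by simpa using Set.mem_iUnion.mpr ⟨i, hx⟩, by simp⟩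

lemma wedgeSum_add {E ι : Type*} [AddCommGroup E] [Module ℝ E] {W : ι → Set E}
    {a b : E} (ha : a ∈ wedgeSum W) (hb : b ∈ wedgeSum W) : a + b ∈ wedgeSum W := by
  obtain ⟨l₁, hl₁, hm₁, hs₁⟩ := ha
  obtain ⟨l₂, hl₂, hm₂, hs₂⟩ := hb
  refine ⟨l₁ ++ l₂, by simp [hl₁], ?_, by simp [hs₁, hs₂]⟩
  intro y hy
  rcases List.mem_append.mp hy with h | h
  · exact hm₁ y h
  · exact hm₂ y h

lemma wedgeSum_smul {E ι : Type*} [AddCommGroup E] [Module ℝ E] {W : ι → Set E}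
    (hW : ∀ i, IsWedge (W i)) {c : ℝ} (hc : 0 ≤ c) {a : E} (ha : a ∈ wedgeSum W) :
    c • a ∈ wedgeSum W := by
  obtain ⟨l, hl, hm, hs⟩ := ha
  refine ⟨l.map (c • ·), by simpa using hl, ?_, ?_⟩
  · intro y hy
    obtain ⟨z, hz, rfl⟩ := List.mem_map.mp hy
    obtain ⟨i, hi⟩ := Set.mem_iUnion.mp (hm z hz)
    exact Set.mem_iUnion.mpr ⟨i, (hW i).2.2 c hc z hi⟩
  · rw [← hs]
    exact list_sum_map_smul c l

lemma wedgeSum_zero {E ι : Type*} [AddCommGroup E] [Module ℝ E] [Nonempty ι]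
    {W : ι → Set E} (hW : ∀ i, IsWedge (W i)) : (0 : E) ∈ wedgeSum W :=
  mem_wedgeSum_of_mem (Classical.arbitrary ι) (hW _).zero_mem'

/-- `wedgeSum W - wedgeSum W` as a submodule. -/
def wedgeSumSub {E ι : Type*} [AddCommGroup E] [Module ℝ E] [Nonempty ι]
    (W : ι → Set E) (hW : ∀ i, IsWedge (W i)) : Submodule ℝ E where
  carrier := wedgeSum W - wedgeSum W
  zero_mem' := ⟨0, wedgeSum_zero hW, 0, wedgeSum_zero hW, by simp⟩
  add_mem' := by
    rintro x y ⟨a, ha, b, hb, rfl⟩ ⟨c, hc, d, hd, rfl⟩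
    exact ⟨a + c, wedgeSum_add ha hc, b + d, wedgeSum_add hb hd, by exact (sub_add_sub_comm a b c d).symm⟩
  smul_mem' := by
    rintro c x ⟨a, ha, b, hb, rfl⟩
    rcases le_or_gt 0 c with hc | hc
    · exact ⟨c • a, wedgeSum_smul hW hc ha, c • b, wedgeSum_smul hW hc hb, by
        simp [smul_sub]⟩
    · refine ⟨(-c) • b, wedgeSum_smul hW (by linarith) hb,
        (-c) • a, wedgeSum_smul hW (by linarith) ha, ?_⟩
      simp [smul_sub, neg_smul]
      abel

open scoped Pointwise

theorem stmt_9 {E F ι κ : Type*} [AddCommGroup E] [Module ℝ E] [AddCommGroup F] [Module ℝ F]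
    [Nontrivial E] [Nontrivial F] [Nonempty ι] [Nonempty κ]
    (W : ι → Set E) (V : κ → Set F) (hW : ∀ i, IsWedge (W i)) (hV : ∀ j, IsWedge (V j)) :
    (⋂ i, ⋂ j, {T : E →ₗ[ℝ] F | ∀ x ∈ W i, T x ∈ V j}) ∩
        (-(⋂ i, ⋂ j, {T : E →ₗ[ℝ] F | ∀ x ∈ W i, T x ∈ V j})) = {0} ↔
      wedgeSum W - wedgeSum W = Set.univ ∧ (⋂ j, V j) ∩ (-(⋂ j, V j)) = {0} := by
  have hVz : ∀ j, (0 : F) ∈ V j := fun j => (hV j).zero_mem'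
  constructor
  · intro h
    -- a helper: any T in both sets is 0
    have key : ∀ T : E →ₗ[ℝ] F, (∀ i j, ∀ x ∈ W i, T x ∈ V j) →
        (∀ i j, ∀ x ∈ W i, -(T x) ∈ V j) → T = 0 := by
      intro T h1 h2
      have : T ∈ (⋂ i, ⋂ j, {T : E →ₗ[ℝ] F | ∀ x ∈ W i, T x ∈ V j}) ∩
          (-(⋂ i, ⋂ j, {T : E →ₗ[ℝ] F | ∀ x ∈ W i, T x ∈ V j})) := by
        constructor
        · simp only [Set.mem_iInter, Set.mem_setOf_eq]
          exact fun i j x hx => h1 i j x hx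
        · rw [Set.mem_neg]
          simp only [Set.mem_iInter, Set.mem_setOf_eq]
          intro i j x hx
          simpa using h2 i j x hx
      rwa [h, Set.mem_singleton_iff] at this
    constructor
    · -- generating
      by_contra hgen
      have hlt : wedgeSumSub W hW < ⊤ := by
        rcases lt_or_eq_of_le (le_top (a := wedgeSumSub W hW)) with h' | h'
        · exact h'
        · exact absurd (by
            have := congrArg (fun p : Submodule ℝ E => (p : Set E)) h'
            exact this) hgen
      haveI := Submodule.Quotient.nontrivial_iff.mpr hlt.ne
      obtain ⟨v, hv⟩ := exists_ne (0 : E ⧸ wedgeSumSub W hW)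
      obtain ⟨g, hg⟩ : ∃ g : Module.Dual ℝ (E ⧸ wedgeSumSub W hW), g v ≠ 0 := by
        by_contra hg
        push_neg at hg
        exact hv ((Module.forall_dual_apply_eq_zero_iff ℝ v).mp hg)
      obtain ⟨v₀, hv₀⟩ := exists_ne (0 : F)
      set f : E →ₗ[ℝ] ℝ := g.comp (wedgeSumSub W hW).mkQ with hf
      set T : E →ₗ[ℝ] F := f.smulRight v₀ with hT
      have hfW : ∀ i, ∀ x ∈ W i, f x = 0 := by
        intro i x hx
        have : x ∈ wedgeSumSub W hW :=
          ⟨x, mem_wedgeSum_of_mem i hx, 0, wedgeSum_zero hW, by simp⟩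
        simp [hf, (Submodule.Quotient.mk_eq_zero _).mpr this]
      have hT0 : T = 0 := by
        refine key T (fun i j x hx => ?_) (fun i j x hx => ?_)
        · simp [hT, hfW i x hx, hVz j]
        · simp [hT, hfW i x hx, hVz j]
      obtain ⟨e, rfl⟩ := Submodule.mkQ_surjective _ v
      have : T e = 0 := by rw [hT0]; rfl
      rw [hT] at this
      simp only [LinearMap.smulRight_apply] at this
      rcases smul_eq_zero.mp this with h' | h'
      · exact hg h'
      · exact hv₀ h'
    · -- cone
      ext v
      simp only [Set.mem_inter_iff, Set.mem_iInter, Set.mem_neg, Set.mem_singleton_iff]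
      constructor
      · rintro ⟨h1, h2⟩
        by_contra hv
        obtain ⟨e, he⟩ := exists_ne (0 : E)
        obtain ⟨g, hg⟩ : ∃ g : Module.Dual ℝ E, g e ≠ 0 := by
          by_contra hg
          push_neg at hg
          exact he ((Module.forall_dual_apply_eq_zero_iff ℝ e).mp hg)
        set T : E →ₗ[ℝ] F := g.smulRight v with hT
        have hmem : ∀ (w : F), (∀ j, w ∈ V j) → (∀ j, -w ∈ V j) →
            ∀ (c : ℝ), ∀ j, c • w ∈ V j := by
          intro w hw hw' c j
          rcases le_or_gt 0 c with hc | hc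
          · exact (hV j).2.2 c hc w (hw j)
          · have : c • w = (-c) • (-w) := by simp
            rw [this]
            exact (hV j).2.2 (-c) (by linarith) (-w) (hw' j)
        have hT0 : T = 0 := by
          refine key T (fun i j x hx => ?_) (fun i j x hx => ?_)
          · simpa [hT] using hmem v h1 h2 (g x) j
          · have : -((g x) • v) = (g x) • (-v) := by simp
            rw [hT]
            simp only [LinearMap.smulRight_apply]
            rw [this]
            exact hmem (-v) h2 (by simpa using h1) (g x) j
        have : T e = 0 := by rw [hT0]; rfl
        rw [hT] at this
        simp only [LinearMap.smulRight_apply] at this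
        rcases smul_eq_zero.mp this with h' | h'
        · exact hg h'
        · exact hv h'
      · rintro rfl
        exact ⟨fun j => hVz j, fun j => by simpa using hVz j⟩
  · rintro ⟨hgen, hcone⟩
    ext T
    simp only [Set.mem_inter_iff, Set.mem_iInter, Set.mem_neg, Set.mem_setOf_eq,
      Set.mem_singleton_iff]
    constructor
    · rintro ⟨h1, h2⟩
      -- T vanishes on each W i
      have hTW : ∀ i, ∀ x ∈ W i, T x = 0 := by
        intro i x hx
        have hmem : T x ∈ (⋂ j, V j) ∩ (-(⋂ j, V j)) := by
          refine ⟨Set.mem_iInter.mpr fun j => h1 i j x hx, ?_⟩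
          rw [Set.mem_neg]
          exact Set.mem_iInter.mpr fun j => by simpa using h2 i j x hx
        rwa [hcone, Set.mem_singleton_iff] at hmem
      have hTsum : ∀ a ∈ wedgeSum W, T a = 0 := by
        rintro a ⟨l, hl, hm, rfl⟩
        clear hl
        induction l with
        | nil => simp
        | cons x xs ih =>
          simp only [List.sum_cons, map_add]
          obtain ⟨i, hi⟩ := Set.mem_iUnion.mp (hm x (by simp))
          rw [hTW i x hi, ih (fun y hy => hm y (by simp [hy])), add_zero]
      ext e
      have : e ∈ wedgeSum W - wedgeSum W := hgen ▸ Set.mem_univ e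
      obtain ⟨a, ha, b, hb, rfl⟩ := this
      simp [map_sub, hTsum a ha, hTsum b hb]
    · rintro rfl
      exact ⟨fun i j x _ => hVz j, fun i j x _ => by simpa using hVz j⟩
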